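/- Let E and F be independent exponentially distributed random variables, each with mean 1. Then lim_{t → 0⁺} ln( Pr[ E·F < t ] ) / ln t = 1. Consequently, for independent exponential transmit power P (mean λ_p) and Rayleigh channel gain Γ (exponential, mean λ_γ) with average SNR γ̄ = λ_p·λ_γ and fixed threshold C > 0, the diversity order d = − lim_{γ̄→∞} log( Pr[PΓ < C] ) / log(γ̄) equals 1, the same as for constant transmit power over a Rayleigh fading channel. -/

import Mathlib

open MeasureTheory ProbabilityTheory Real Set Filter

lemma exp_Iic (a : ℝ) :
    expMeasure 1 (Iic a) = ENNReal.ofReal (if 0 ≤ a then 1 - Real.exp (-a) else 0) := by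
  rw [expMeasure, gammaMeasure, withDensity_apply _ measurableSet_Iic]
  have h := lintegral_exponentialPDF_eq_antiDeriv (r := 1) one_pos a
  simp only [one_mul] at h
  rw [← h]
  rfl

lemma exp_singleton (a : ℝ) : expMeasure 1 {a} = 0 := by
  have : expMeasure 1 ≪ (volume : Measure ℝ) := by
    rw [expMeasure, gammaMeasure]; exact withDensity_absolutelyContinuous _ _
  exact this (volume_singleton)

lemma exp_Iio (a : ℝ) (ha : 0 ≤ a) :
    expMeasure 1 (Iio a) = ENNReal.ofReal (1 - Real.exp (-a)) := by
  have h1 : expMeasure 1 (Iic a) = ENNReal.ofReal (1 - Real.exp (-a)) := by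
    rw [exp_Iic, if_pos ha]
  refine le_antisymm ?_ ?_
  · rw [← h1]; exact measure_mono Iio_subset_Iic_self
  · rw [← h1]
    calc expMeasure 1 (Iic a) ≤ expMeasure 1 (Iio a ∪ {a}) := by
          apply measure_mono; intro x hx
          rcases lt_or_eq_of_le (mem_Iic.mp hx) with h | h
          · exact Or.inl h
          · exact Or.inr h
      _ ≤ expMeasure 1 (Iio a) + expMeasure 1 {a} := measure_union_le _ _
      _ = expMeasure 1 (Iio a) := by rw [exp_singleton, add_zero]

lemma exp_Ico (a : ℝ) (ha : 0 ≤ a) : expMeasure 1 (Ico 0 a) = expMeasure 1 (Iio a) := by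
  have h0 : expMeasure 1 (Iio 0) = 0 := by
    refine le_antisymm ?_ zero_le
    calc expMeasure 1 (Iio 0) ≤ expMeasure 1 (Iic 0) := measure_mono Iio_subset_Iic_self
      _ = 0 := by rw [exp_Iic]; simp
  refine le_antisymm (measure_mono Ico_subset_Iio_self) ?_
  calc expMeasure 1 (Iio a) ≤ expMeasure 1 (Ico 0 a ∪ Iio 0) := by
        apply measure_mono; intro x hx
        rcases le_or_gt 0 x with h | h
        · exact Or.inl ⟨h, hx⟩
        · exact Or.inr h
    _ ≤ expMeasure 1 (Ico 0 a) + expMeasure 1 (Iio 0) := measure_union_le _ _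
    _ = expMeasure 1 (Ico 0 a) := by rw [h0, add_zero]

lemma exp_Iio_le (a : ℝ) : expMeasure 1 (Iio a) ≤ ENNReal.ofReal a := by
  rcases le_or_gt a 0 with h | h
  · calc expMeasure 1 (Iio a) ≤ expMeasure 1 (Iic a) := measure_mono Iio_subset_Iic_self
      _ ≤ ENNReal.ofReal a := by
        rw [exp_Iic]
        rcases eq_or_lt_of_le h with h' | h'
        · simp [h']
        · rw [if_neg (not_le.mpr h')]; simp
  · rw [exp_Iio a h.le]
    apply ENNReal.ofReal_le_ofReal
    nlinarith [Real.add_one_le_exp (-a)]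

lemma exp_Iic_le (a : ℝ) : expMeasure 1 (Iic a) ≤ ENNReal.ofReal a := by
  rw [exp_Iic]
  split_ifs with h
  · apply ENNReal.ofReal_le_ofReal
    nlinarith [Real.add_one_le_exp (-a)]
  · simp

lemma exp_Iio_ge (a : ℝ) (h0 : 0 ≤ a) (h1 : a ≤ 1) :
    ENNReal.ofReal (a / 2) ≤ expMeasure 1 (Iio a) := by
  rw [exp_Iio a h0]
  apply ENNReal.ofReal_le_ofReal
  have h := Real.add_one_le_exp a
  have hpos : (0:ℝ) < Real.exp a := Real.exp_pos a
  rw [Real.exp_neg]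
  have h2 : (Real.exp a)⁻¹ ≤ (1 + a)⁻¹ := inv_anti₀ (by linarith) (by linarith)
  have h3 : (1+a)⁻¹ ≤ 1 - a/2 := by
    rw [inv_le_iff_one_le_mul₀ (by linarith : (0:ℝ) < 1+a)]
    nlinarith
  linarith


section RV
variable {Ω : Type*} [MeasurableSpace Ω] {μ : Measure Ω}
  {E F : Ω → ℝ}

lemma P_lower (hE : Measurable E) (hF : Measurable F) (hindep : IndepFun E F μ)
    (hElaw : Measure.map E μ = expMeasure 1) (hFlaw : Measure.map F μ = expMeasure 1)
    (t : ℝ) (ht0 : 0 < t) (ht1 : t < 1) :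
    ENNReal.ofReal (t / 4) ≤ μ {ω | E ω * F ω < t} := by
  set s := Real.sqrt t with hs
  have hs0 : 0 < s := Real.sqrt_pos.mpr ht0
  have hs1 : s ≤ 1 := by
    rw [hs, show (1:ℝ) = Real.sqrt 1 by simp]
    exact Real.sqrt_le_sqrt ht1.le
  have hss : s * s = t := Real.mul_self_sqrt ht0.le
  have hsub : E ⁻¹' (Ico 0 s) ∩ F ⁻¹' (Ico 0 s) ⊆ {ω | E ω * F ω < t} := by
    rintro ω ⟨⟨hE0, hEs⟩, hF0, hFs⟩
    simp only [mem_setOf_eq]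
    nlinarith
  have hmul := hindep.measure_inter_preimage_eq_mul (Ico 0 s) (Ico 0 s) measurableSet_Ico measurableSet_Ico
  have hEm : μ (E ⁻¹' Ico 0 s) = expMeasure 1 (Ico 0 s) := by
    rw [← hElaw, Measure.map_apply hE measurableSet_Ico]
  have hFm : μ (F ⁻¹' Ico 0 s) = expMeasure 1 (Ico 0 s) := by
    rw [← hFlaw, Measure.map_apply hF measurableSet_Ico]
  have hge : ENNReal.ofReal (s/2) ≤ expMeasure 1 (Ico 0 s) := by
    rw [exp_Ico s hs0.le]; exact exp_Iio_ge s hs0.le hs1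
  calc ENNReal.ofReal (t/4) = ENNReal.ofReal (s/2) * ENNReal.ofReal (s/2) := by
        rw [← ENNReal.ofReal_mul (by positivity)]
        congr 1; nlinarith
    _ ≤ expMeasure 1 (Ico 0 s) * expMeasure 1 (Ico 0 s) := mul_le_mul' hge hge
    _ = μ (E ⁻¹' Ico 0 s) * μ (F ⁻¹' Ico 0 s) := by rw [hEm, hFm]
    _ = μ (E ⁻¹' Ico 0 s ∩ F ⁻¹' Ico 0 s) := (hmul).symm
    _ ≤ μ {ω | E ω * F ω < t} := measure_mono hsub

lemma P_upper (hE : Measurable E) (hF : Measurable F) (hindep : IndepFun E F μ)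
    (hElaw : Measure.map E μ = expMeasure 1) (hFlaw : Measure.map F μ = expMeasure 1)
    (t : ℝ) (ht0 : 0 < t) (ht1 : t < 1) :
    μ {ω | E ω * F ω < t} ≤ ENNReal.ofReal (2 * t * (Real.logb 2 t⁻¹ + 2)) := by
  set L := Real.logb 2 t⁻¹ with hL
  have hL0 : 0 < L := Real.logb_pos one_lt_two ((one_lt_inv₀ ht0).mpr ht1)
  set N := Nat.floor L with hN
  set S : ℕ → Set Ω := fun k => E ⁻¹' Iic ((2:ℝ)⁻¹ ^ k) ∩ F ⁻¹' Iio (2 * t * 2 ^ k) with hS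
  have hsub : {ω | E ω * F ω < t} ⊆
      (E ⁻¹' Iio t ∪ F ⁻¹' Iio t) ∪ ⋃ k ∈ Finset.range (N + 1), S k := by
    intro ω hω
    simp only [mem_setOf_eq] at hω
    by_cases hEt : E ω < t
    · exact Or.inl (Or.inl hEt)
    push_neg at hEt
    have hE0 : 0 < E ω := lt_of_lt_of_le ht0 hEt
    have hFlt : F ω < t / E ω := (lt_div_iff₀ hE0).mpr (by nlinarith [hω])
    by_cases hE1 : 1 ≤ E ω
    · refine Or.inl (Or.inr ?_)
      have : t / E ω ≤ t := by
        rw [div_le_iff₀ hE0]; nlinarith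
      exact lt_of_lt_of_le hFlt this
    push_neg at hE1
    -- t ≤ E ω < 1
    set L' := Real.logb 2 (E ω)⁻¹ with hL'
    have hL'0 : 0 < L' := Real.logb_pos one_lt_two ((one_lt_inv₀ hE0).mpr hE1)
    have hL'L : L' ≤ L := by
      exact Real.logb_le_logb_of_le one_lt_two (inv_pos.mpr hE0) (inv_anti₀ ht0 hEt)
    have hc1 : 1 ≤ Nat.ceil L' := Nat.one_le_ceil_iff.mpr hL'0
    set k := Nat.ceil L' - 1 with hk
    have hk1 : k + 1 = Nat.ceil L' := by omega
    have hkL' : (k : ℝ) ≤ L' := by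
      have := Nat.ceil_lt_add_one hL'0.le
      have hcast : ((Nat.ceil L' : ℕ) : ℝ) < L' + 1 := this
      have : (k : ℝ) = (Nat.ceil L' : ℝ) - 1 := by
        rw [hk, Nat.cast_sub hc1, Nat.cast_one]
      linarith
    have hkN : k ∈ Finset.range (N + 1) := by
      rw [Finset.mem_range]
      have : k ≤ N := Nat.le_floor (le_trans hkL' hL'L)
      omega
    refine Or.inr (mem_biUnion hkN ?_)
    constructor
    · -- E ω ≤ (2⁻¹)^k
      simp only [mem_preimage, mem_Iic]
      have h2k : (2:ℝ) ^ (k:ℝ) ≤ (E ω)⁻¹ :=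
        (Real.le_logb_iff_rpow_le one_lt_two (inv_pos.mpr hE0)).mp hkL'
      rw [Real.rpow_natCast] at h2k
      have := inv_anti₀ (by positivity : (0:ℝ) < 2 ^ k) h2k
      rw [inv_inv] at this
      rw [inv_pow]
      exact this
    · -- F ω < 2 t 2^k
      simp only [mem_preimage, mem_Iio]
      have hup : L' ≤ (k:ℝ) + 1 := by
        have := Nat.le_ceil L'
        rw [← hk1] at this; push_cast at this; linarith
      have h2k : (E ω)⁻¹ ≤ (2:ℝ) ^ ((k:ℝ) + 1) := by
        rw [← Real.rpow_logb (b := 2) (by norm_num) (by norm_num) (inv_pos.mpr hE0)]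
        exact Real.rpow_le_rpow_of_exponent_le one_le_two hup
      have h2k' : (E ω)⁻¹ ≤ 2 * 2 ^ k := by
        rw [show ((k:ℝ)+1) = ((k+1 : ℕ) : ℝ) by push_cast; ring, Real.rpow_natCast] at h2k
        calc (E ω)⁻¹ ≤ (2:ℝ) ^ (k+1) := h2k
          _ = 2 * 2 ^ k := by ring
      calc F ω < t / E ω := hFlt
        _ = t * (E ω)⁻¹ := div_eq_mul_inv _ _
        _ ≤ t * (2 * 2 ^ k) := by
            apply mul_le_mul_of_nonneg_left h2k' ht0.le
        _ = 2 * t * 2 ^ k := by ring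
  -- measure bound
  have hNL : (N : ℝ) ≤ L := Nat.floor_le hL0.le
  have hAB : μ (E ⁻¹' Iio t) ≤ ENNReal.ofReal t ∧ μ (F ⁻¹' Iio t) ≤ ENNReal.ofReal t := by
    constructor
    · rw [← Measure.map_apply hE measurableSet_Iio, hElaw]; exact exp_Iio_le t
    · rw [← Measure.map_apply hF measurableSet_Iio, hFlaw]; exact exp_Iio_le t
  have hSk : ∀ k, μ (S k) ≤ ENNReal.ofReal (2 * t) := by
    intro k
    have hmul := hindep.measure_inter_preimage_eq_mul (Iic ((2:ℝ)⁻¹ ^ k))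
      (Iio (2 * t * 2 ^ k)) measurableSet_Iic measurableSet_Iio
    calc μ (S k) = μ (E ⁻¹' Iic ((2:ℝ)⁻¹ ^ k)) * μ (F ⁻¹' Iio (2 * t * 2 ^ k)) := hmul
      _ = expMeasure 1 (Iic ((2:ℝ)⁻¹ ^ k)) * expMeasure 1 (Iio (2 * t * 2 ^ k)) := by
          rw [← Measure.map_apply hE measurableSet_Iic, ← Measure.map_apply hF measurableSet_Iio,
            hElaw, hFlaw]
      _ ≤ ENNReal.ofReal ((2:ℝ)⁻¹ ^ k) * ENNReal.ofReal (2 * t * 2 ^ k) :=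
          mul_le_mul' (exp_Iic_le _) (exp_Iio_le _)
      _ = ENNReal.ofReal ((2:ℝ)⁻¹ ^ k * (2 * t * 2 ^ k)) :=
          (ENNReal.ofReal_mul (by positivity)).symm
      _ = ENNReal.ofReal (2 * t) := by
          congr 1
          have h1 : ((2:ℝ)⁻¹ * 2) ^ k = 1 := by norm_num
          rw [mul_pow] at h1
          linear_combination 2 * t * h1
  calc μ {ω | E ω * F ω < t}
      ≤ μ ((E ⁻¹' Iio t ∪ F ⁻¹' Iio t) ∪ ⋃ k ∈ Finset.range (N + 1), S k) :=
        measure_mono hsub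
    _ ≤ μ (E ⁻¹' Iio t ∪ F ⁻¹' Iio t) + μ (⋃ k ∈ Finset.range (N + 1), S k) :=
        measure_union_le _ _
    _ ≤ (μ (E ⁻¹' Iio t) + μ (F ⁻¹' Iio t)) + ∑ k ∈ Finset.range (N + 1), μ (S k) :=
        add_le_add (measure_union_le _ _) (measure_biUnion_finset_le _ _)
    _ ≤ (ENNReal.ofReal t + ENNReal.ofReal t) +
          ∑ k ∈ Finset.range (N + 1), ENNReal.ofReal (2 * t) := by
        gcongr
        · exact hAB.1
        · exact hAB.2
        · exact hSk _
    _ = (ENNReal.ofReal t + ENNReal.ofReal t) + (N + 1) * ENNReal.ofReal (2 * t) := by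
        rw [Finset.sum_const, Finset.card_range, nsmul_eq_mul]
        push_cast
        ring
    _ = ENNReal.ofReal (t + t + ((N:ℝ) + 1) * (2 * t)) := by
        rw [ENNReal.ofReal_add (by positivity) (by positivity),
          ENNReal.ofReal_add (by positivity) (by positivity),
          ENNReal.ofReal_mul (p := (N:ℝ) + 1) (by positivity)]
        have hN1 : ENNReal.ofReal ((N:ℝ) + 1) = (N : ENNReal) + 1 := by
          rw [show ((N:ℝ) + 1) = ((N + 1 : ℕ) : ℝ) by push_cast; ring,
            ENNReal.ofReal_natCast]
          push_cast
          ring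
        rw [hN1]
    _ ≤ ENNReal.ofReal (2 * t * (L + 2)) := by
        apply ENNReal.ofReal_le_ofReal
        nlinarith
end RV

lemma log_affine_div_tendsto (a b : ℝ) (ha : 0 < a) :
    Tendsto (fun u : ℝ => Real.log (a * u + b) / u) atTop (nhds 0) := by
  have h1 : Tendsto (fun v : ℝ => Real.log v ^ 1 / (a⁻¹ * v + (-b / a))) atTop (nhds 0) :=
    Real.tendsto_pow_log_div_mul_add_atTop a⁻¹ (-b / a) 1 (by positivity)
  have h2 : Tendsto (fun u : ℝ => a * u + b) atTop atTop :=
    tendsto_atTop_add_const_right _ b (tendsto_id.const_mul_atTop ha)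
  have h3 := h1.comp h2
  apply h3.congr
  intro u
  simp only [Function.comp_apply, pow_one]
  congr 1
  field_simp
  ring

lemma log_ratio_tendsto (P : ℝ → ℝ)
    (hlow : ∀ t, 0 < t → t < 1 → t / 4 ≤ P t)
    (hup : ∀ t, 0 < t → t < 1 → P t ≤ 2 * t * (Real.logb 2 t⁻¹ + 2)) :
    Tendsto (fun t => Real.log (P t) / Real.log t) (nhdsWithin 0 (Ioi 0)) (nhds 1) := by
  have hmem : Ioo (0:ℝ) 1 ∈ nhdsWithin (0:ℝ) (Ioi 0) :=
    Ioo_mem_nhdsGT_of_mem ⟨le_refl 0, one_pos⟩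
  have hnegtop : Tendsto (fun t : ℝ => -Real.log t) (nhdsWithin 0 (Ioi 0)) atTop :=
    tendsto_neg_atBot_atTop.comp Real.tendsto_log_nhdsGT_zero
  -- upper squeeze function
  have hhi : Tendsto (fun t : ℝ => 1 + Real.log 4 / (-Real.log t))
      (nhdsWithin 0 (Ioi 0)) (nhds 1) := by
    have := (hnegtop.const_div_atTop (Real.log 4))
    simpa using tendsto_const_nhds.add this
  -- lower squeeze function
  have hlo : Tendsto (fun t : ℝ => 1 + Real.log (2 * (Real.logb 2 t⁻¹ + 2)) / Real.log t)
      (nhdsWithin 0 (Ioi 0)) (nhds 1) := by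
    have ha : (0:ℝ) < 2 / Real.log 2 := by positivity
    have h1 := (log_affine_div_tendsto (2 / Real.log 2) 4 ha).comp hnegtop
    have h2 : Tendsto (fun t : ℝ => -(Real.log (2 / Real.log 2 * (-Real.log t) + 4) /
        (-Real.log t))) (nhdsWithin 0 (Ioi 0)) (nhds 0) := by
      simpa using h1.neg
    have h3 : Tendsto (fun t : ℝ => Real.log (2 * (Real.logb 2 t⁻¹ + 2)) / Real.log t)
        (nhdsWithin 0 (Ioi 0)) (nhds 0) := by
      apply h2.congr
      intro t
      have harg : 2 / Real.log 2 * (-Real.log t) + 4 = 2 * (Real.logb 2 t⁻¹ + 2) := by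
        rw [Real.logb, Real.log_inv]
        field_simp
        ring
      rw [harg, div_neg, neg_neg]
    simpa using tendsto_const_nhds.add h3
  refine tendsto_of_tendsto_of_tendsto_of_le_of_le' hlo hhi ?_ ?_
  · filter_upwards [hmem] with t ht
    obtain ⟨ht0, ht1⟩ := ht
    have hlt : Real.log t < 0 := Real.log_neg ht0 ht1
    have hL0 : 0 < Real.logb 2 t⁻¹ := Real.logb_pos one_lt_two ((one_lt_inv₀ ht0).mpr ht1)
    have hP0 : 0 < P t := lt_of_lt_of_le (by positivity) (hlow t ht0 ht1)
    have hlog2 : Real.log (P t) ≤ Real.log t + Real.log (2 * (Real.logb 2 t⁻¹ + 2)) := by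
      rw [← Real.log_mul ht0.ne' (by positivity)]
      apply Real.log_le_log hP0
      calc P t ≤ 2 * t * (Real.logb 2 t⁻¹ + 2) := hup t ht0 ht1
        _ = t * (2 * (Real.logb 2 t⁻¹ + 2)) := by ring
    have := div_le_div_of_nonpos_of_le hlt.le hlog2
    calc 1 + Real.log (2 * (Real.logb 2 t⁻¹ + 2)) / Real.log t
        = (Real.log t + Real.log (2 * (Real.logb 2 t⁻¹ + 2))) / Real.log t := by
          rw [add_div, div_self hlt.ne]
      _ ≤ Real.log (P t) / Real.log t := this
  · filter_upwards [hmem] with t ht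
    obtain ⟨ht0, ht1⟩ := ht
    have hlt : Real.log t < 0 := Real.log_neg ht0 ht1
    have hP0 : 0 < P t := lt_of_lt_of_le (by positivity) (hlow t ht0 ht1)
    have hlog1 : Real.log t - Real.log 4 ≤ Real.log (P t) := by
      rw [← Real.log_div ht0.ne' (by norm_num)]
      exact Real.log_le_log (by positivity) (hlow t ht0 ht1)
    have := div_le_div_of_nonpos_of_le hlt.le hlog1
    calc Real.log (P t) / Real.log t ≤ (Real.log t - Real.log 4) / Real.log t := this
      _ = 1 + Real.log 4 / (-Real.log t) := by
          rw [sub_div, div_self hlt.ne, div_neg]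
          ring

lemma part2_aux (f : ℝ → ℝ)
    (hf : Tendsto (fun t => Real.log (f t) / Real.log t) (nhdsWithin 0 (Ioi 0)) (nhds 1))
    (C : ℝ) (hC : 0 < C) :
    Tendsto (fun γ : ℝ => -(Real.log (f (C / γ)) / Real.log γ)) atTop (nhds 1) := by
  have hcomp : Tendsto (fun γ : ℝ => C / γ) atTop (nhdsWithin 0 (Ioi 0)) := by
    rw [tendsto_nhdsWithin_iff]
    constructor
    · exact Tendsto.const_div_atTop tendsto_id C
    · filter_upwards [eventually_gt_atTop 0] with γ hγ
      exact div_pos hC hγ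
  have h1 : Tendsto (fun γ : ℝ => Real.log (f (C / γ)) / Real.log (C / γ))
      atTop (nhds 1) := hf.comp hcomp
  have h2 : Tendsto (fun γ : ℝ => -Real.log (C / γ) / Real.log γ) atTop (nhds 1) := by
    have hbase : Tendsto (fun γ : ℝ => 1 - Real.log C / Real.log γ) atTop (nhds 1) := by
      have := Tendsto.const_div_atTop Real.tendsto_log_atTop (Real.log C)
      simpa using tendsto_const_nhds.sub this
    apply hbase.congr'
    filter_upwards [eventually_gt_atTop 1] with γ hγ
    have hγ0 : (0:ℝ) < γ := lt_trans one_pos hγ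
    have hlogγ : 0 < Real.log γ := Real.log_pos hγ
    rw [Real.log_div hC.ne' hγ0.ne']
    field_simp
    ring
  have hmul := h1.mul h2
  rw [one_mul] at hmul
  apply hmul.congr'
  filter_upwards [eventually_gt_atTop (max 1 C)] with γ hγ
  have hγ1 : 1 < γ := lt_of_le_of_lt (le_max_left _ _) hγ
  have hγ0 : (0:ℝ) < γ := lt_trans one_pos hγ1
  have ht0 : 0 < C / γ := div_pos hC hγ0
  have ht1 : C / γ < 1 := (div_lt_one hγ0).mpr (lt_of_le_of_lt (le_max_right _ _) hγ)
  have hb : Real.log (C / γ) < 0 := Real.log_neg ht0 ht1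
  have hc : 0 < Real.log γ := Real.log_pos hγ1
  set a := Real.log (f (C / γ))
  set b := Real.log (C / γ)
  set c := Real.log γ
  show a / b * (-b / c) = -(a / c)
  rw [neg_div, mul_neg, neg_inj, div_mul_div_comm, mul_comm b c, mul_div_mul_right _ _ hb.ne]

/-- Let `E` and `F` be independent exponentially distributed random variables,
each with mean 1.  Then `ln(Pr[E·F < t]) / ln t → 1` as `t → 0⁺`.  Consequently,
for independent exponential transmit power `P` (mean `λ_p`) and Rayleigh channel
gain `Γ` (exponential, mean `λ_γ`) with average SNR `γ̄ = λ_p·λ_γ` and fixed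
threshold `C > 0`, the scaling identity `Pr[PΓ < C] = Pr[EF < C/γ̄]` shows that
the diversity order `d = − lim_{γ̄→∞} log(Pr[PΓ < C])/log(γ̄)` equals 1, the same
as for constant transmit power over a Rayleigh fading channel. -/
theorem diversity_order_one {Ω : Type*} [MeasurableSpace Ω]
    (μ : Measure Ω) [IsProbabilityMeasure μ] (E F : Ω → ℝ)
    (hE : Measurable E) (hF : Measurable F) (hindep : IndepFun E F μ)
    (hElaw : Measure.map E μ = expMeasure 1)
    (hFlaw : Measure.map F μ = expMeasure 1) :
    Filter.Tendsto
      (fun t : ℝ => Real.log (μ {ω | E ω * F ω < t}).toReal / Real.log t)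
      (nhdsWithin (0 : ℝ) (Set.Ioi 0)) (nhds 1) ∧
    ∀ C : ℝ, 0 < C →
      Filter.Tendsto
        (fun γbar : ℝ =>
          -(Real.log (μ {ω | E ω * F ω < C / γbar}).toReal / Real.log γbar))
        Filter.atTop (nhds 1) := by
  set P : ℝ → ℝ := fun t => (μ {ω | E ω * F ω < t}).toReal with hP
  have hlow : ∀ t, 0 < t → t < 1 → t / 4 ≤ P t := by
    intro t ht0 ht1
    have h := P_lower hE hF hindep hElaw hFlaw t ht0 ht1
    calc t / 4 = (ENNReal.ofReal (t / 4)).toReal := (ENNReal.toReal_ofReal (by positivity)).symm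
      _ ≤ P t := ENNReal.toReal_mono (measure_ne_top μ _) h
  have hup : ∀ t, 0 < t → t < 1 → P t ≤ 2 * t * (Real.logb 2 t⁻¹ + 2) := by
    intro t ht0 ht1
    have hL0 : 0 < Real.logb 2 t⁻¹ := Real.logb_pos one_lt_two ((one_lt_inv₀ ht0).mpr ht1)
    exact ENNReal.toReal_le_of_le_ofReal (by nlinarith)
      (P_upper hE hF hindep hElaw hFlaw t ht0 ht1)
  have hpart1 := log_ratio_tendsto P hlow hup
  exact ⟨hpart1, fun C hC => part2_aux P hpart1 C hC⟩
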